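/- Let (X,d) be a compact metric space and T : X → X a continuous map satisfying the almost specification property with mistake function g (with constants k_g), where moreover g(n,ε) is nondecreasing in ε. Suppose there exist real numbers σ > 2δ > 0, an integer N ∈ ℕ with N ≥ k_g(δ), and points x, y ∈ X that are (2g; N, σ)-separated. Then for every m ∈ ℕ with m ≥ 1 one has s_{mN}(X, σ − 2δ) ≥ 2^m. -/
import Mathlib


open Filter Set

/-- A *mistake function* (with threshold `ε₀`): `g n ε` is nondecreasing in `n`,
`g n ε / n → 0`, and `g n ε = g n ε₀` for `ε ≥ ε₀`. -/
def IsMistakeFunction (ε₀ : ℝ) (g : ℕ → ℝ → ℕ) : Prop :=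
  0 < ε₀ ∧
  (∀ ε : ℝ, 0 < ε → ε < ε₀ → ∀ n : ℕ, g n ε ≤ g (n + 1) ε) ∧
  (∀ ε : ℝ, 0 < ε → ε < ε₀ →
    Filter.Tendsto (fun n : ℕ => (g n ε : ℝ) / n) Filter.atTop (nhds 0)) ∧
  (∀ ε : ℝ, ε₀ ≤ ε → ∀ n : ℕ, g n ε = g n ε₀)

/-- The `(g; n, ε)` Bowen ball `B_n(g; x, ε)`: points `y` that `ε`-trace the orbit of `x`
along some `Λ ⊆ {0, …, n-1}` with `#Λ ≥ n - g(n,ε)`. -/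
def mistakeBall {X : Type*} [MetricSpace X] (T : X → X) (g : ℕ → ℝ → ℕ)
    (n : ℕ) (x : X) (ε : ℝ) : Set X :=
  {y | ∃ Λ : Finset ℕ, Λ ⊆ Finset.range n ∧ n - g n ε ≤ Λ.card ∧
    ∀ j ∈ Λ, dist (T^[j] x) (T^[j] y) < ε}

/-- `T` has the almost specification property with mistake function `g` and constants `kg`. -/
def AlmostSpecWith {X : Type*} [MetricSpace X] (T : X → X) (g : ℕ → ℝ → ℕ)
    (kg : ℝ → ℕ) : Prop :=
  ∀ m : ℕ, ∀ eps : Fin m → ℝ, (∀ j, 0 < eps j) →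
    ∀ xs : Fin m → X, ∀ ns : Fin m → ℕ, (∀ j, kg (eps j) ≤ ns j) →
      ∃ z : X, ∀ j : Fin m,
        T^[∑ s ∈ Finset.Iio j, ns s] z ∈ mistakeBall T g (ns j) (xs j) (eps j)

/-- `T` has the almost specification property (for some mistake function). -/
def HasAlmostSpec {X : Type*} [MetricSpace X] (T : X → X) : Prop :=
  ∃ (ε₀ : ℝ) (g : ℕ → ℝ → ℕ), IsMistakeFunction ε₀ g ∧
    ∃ kg : ℝ → ℕ, AlmostSpecWith T g kg

/-- `s_n(X, ε)`: the maximal cardinality of an `(n, ε)`-separated subset of `X`. -/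
noncomputable def sepNum {X : Type*} [MetricSpace X] (T : X → X) (n : ℕ) (ε : ℝ) : ℕ :=
  sSup {k : ℕ | ∃ F : Finset X,
    (∀ x ∈ F, ∀ y ∈ F, x ≠ y → ∃ j < n, ε < dist (T^[j] x) (T^[j] y)) ∧ F.card = k}

/-- `s_n(g; X, ε)`: the maximal cardinality of a `(g; n, ε)`-separated subset of `X`. -/
noncomputable def sepNumG {X : Type*} [MetricSpace X] (T : X → X) (g : ℕ → ℝ → ℕ)
    (n : ℕ) (ε : ℝ) : ℕ :=
  sSup {k : ℕ | ∃ F : Finset X,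
    (∀ x ∈ F, ∀ y ∈ F, x ≠ y →
      g n ε < Set.ncard {j : ℕ | j < n ∧ ε < dist (T^[j] x) (T^[j] y)}) ∧ F.card = k}

/-- Topological entropy `h_top(T) = lim_{ε→0} limsup_n (1/n) log s_n(X,ε)`; since the
inner quantity is nonincreasing in `ε`, the limit as `ε → 0⁺` is the supremum over `ε > 0`. -/
noncomputable def topEntropy {X : Type*} [MetricSpace X] (T : X → X) : EReal :=
  ⨆ ε : {e : ℝ // 0 < e}, Filter.atTop.limsup
    (fun n : ℕ => ((Real.log (sepNum T n ε.1) / n : ℝ) : EReal))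


private lemma exists_uniform_mod {X : Type*} [MetricSpace X] [CompactSpace X]
    (T : X → X) (hT : Continuous T) (n : ℕ) (ε : ℝ) (hε : 0 < ε) :
    ∃ η > 0, ∀ j < n, ∀ a b : X, dist a b < η → dist (T^[j] a) (T^[j] b) ≤ ε := by
  induction n with
  | zero => exact ⟨1, one_pos, by omega⟩
  | succ n ih =>
    obtain ⟨η₁, hη₁, h1⟩ := ih
    have huc : UniformContinuous (T^[n]) :=
      CompactSpace.uniformContinuous_of_continuous (hT.iterate n)
    rw [Metric.uniformContinuous_iff] at huc
    obtain ⟨η₂, hη₂, h2⟩ := huc ε hε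
    refine ⟨min η₁ η₂, lt_min hη₁ hη₂, fun j hj a b hab => ?_⟩
    rcases Nat.lt_succ_iff_lt_or_eq.1 hj with hj | rfl
    · exact h1 j hj a b (hab.trans_le (min_le_left _ _))
    · exact (h2 (hab.trans_le (min_le_right _ _))).le

private lemma sepSet_bddAbove {X : Type*} [MetricSpace X] [CompactSpace X]
    (T : X → X) (hT : Continuous T) (n : ℕ) (ε : ℝ) (hε : 0 < ε) :
    BddAbove {k : ℕ | ∃ F : Finset X,
      (∀ x ∈ F, ∀ y ∈ F, x ≠ y → ∃ j < n, ε < dist (T^[j] x) (T^[j] y)) ∧ F.card = k} := by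
  classical
  obtain ⟨η, hη, hmod⟩ := exists_uniform_mod T hT n ε hε
  have htb : TotallyBounded (Set.univ : Set X) := isCompact_univ.totallyBounded
  rw [Metric.totallyBounded_iff] at htb
  obtain ⟨t, htf, htc⟩ := htb (η / 2) (by linarith)
  refine ⟨htf.toFinset.card, fun k hk => ?_⟩
  obtain ⟨F, hFsep, rfl⟩ := hk
  have : ∀ a : X, ∃ c ∈ htf.toFinset, a ∈ Metric.ball c (η / 2) := by
    intro a
    have := htc (Set.mem_univ a)
    simp only [Set.mem_iUnion] at this
    obtain ⟨c, hc, hac⟩ := this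
    exact ⟨c, htf.mem_toFinset.2 hc, hac⟩
  choose f hf1 hf2 using this
  refine Finset.card_le_card_of_injOn f (fun a _ => hf1 a) ?_
  intro a ha b hb hab
  by_contra hne
  obtain ⟨j, hj, hjd⟩ := hFsep a ha b hb hne
  have hdab : dist a b < η := by
    have h1 := hf2 a; have h2 := hf2 b
    rw [Metric.mem_ball] at h1 h2
    rw [hab] at h1
    calc dist a b ≤ dist a (f b) + dist (f b) b := dist_triangle _ _ _
      _ < η / 2 + η / 2 := by rw [dist_comm (f b) b]; exact add_lt_add h1 h2
      _ = η := by ring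
  exact absurd (hmod j hj a b hdab) (not_le.2 hjd)

/-- under the hypotheses of Statement 4, `s_{mN}(X, σ - 2δ) ≥ 2^m` for all
`m ≥ 1`. -/
theorem sepNum_exponential_growth {X : Type*} [MetricSpace X] [CompactSpace X]
    (T : X → X) (hT : Continuous T) (ε₀ : ℝ) (g : ℕ → ℝ → ℕ)
    (hg : IsMistakeFunction ε₀ g)
    (hmono : ∀ n : ℕ, ∀ ε ε' : ℝ, 0 < ε → ε ≤ ε' → g n ε ≤ g n ε')
    (kg : ℝ → ℕ) (hspec : AlmostSpecWith T g kg)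
    (σ δ : ℝ) (hδ : 0 < δ) (hσ : 2 * δ < σ)
    (N : ℕ) (hNk : kg δ ≤ N) (x y : X)
    (hsep : 2 * g N σ < Set.ncard {j : ℕ | j < N ∧ σ < dist (T^[j] x) (T^[j] y)}) :
    ∀ m : ℕ, 1 ≤ m → 2 ^ m ≤ sepNum T (m * N) (σ - 2 * δ) := by
  classical
  intro m hm
  set Sf : Finset ℕ := (Finset.range N).filter (fun j => σ < dist (T^[j] x) (T^[j] y)) with hSfdef
  have hS : {j : ℕ | j < N ∧ σ < dist (T^[j] x) (T^[j] y)} = ↑Sf := by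
    ext j; simp [hSfdef]
  rw [hS, Set.ncard_coe_finset] at hsep
  have hδσ : δ ≤ σ := by linarith
  have hgg : g N δ ≤ g N σ := hmono N δ σ hδ hδσ
  -- construct the shadowing points
  have hz : ∀ w : Fin m → Bool, ∃ z : X, ∀ i : Fin m,
      T^[(i : ℕ) * N] z ∈ mistakeBall T g N (if w i then x else y) δ := by
    intro w
    obtain ⟨z, hz⟩ := hspec m (fun _ => δ) (fun _ => hδ)
      (fun i => if w i then x else y) (fun _ => N) (fun _ => hNk)
    refine ⟨z, fun i => ?_⟩
    have hsum : ∑ s ∈ Finset.Iio i, N = (i : ℕ) * N := by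
      rw [Finset.sum_const, smul_eq_mul, Fin.card_Iio]
    have := hz i
    rwa [hsum] at this
  choose z hz using hz
  -- key separation estimate
  have key : ∀ w w' : Fin m → Bool, w ≠ w' →
      ∃ j < m * N, σ - 2 * δ < dist (T^[j] (z w)) (T^[j] (z w')) := by
    intro w w' hww
    obtain ⟨i, hi⟩ := Function.ne_iff.1 hww
    obtain ⟨Λ, hΛsub, hΛcard, hΛtr⟩ := hz w i
    obtain ⟨Λ', hΛ'sub, hΛ'card, hΛ'tr⟩ := hz w' i
    -- find a common good time
    have hΛc : (Sf \ Λ).card ≤ g N δ := by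
      have h1 : Sf \ Λ ⊆ Finset.range N \ Λ :=
        Finset.sdiff_subset_sdiff (Finset.filter_subset _ _) le_rfl
      have h2 : (Finset.range N \ Λ).card = N - Λ.card := by
        rw [Finset.card_sdiff_of_subset hΛsub, Finset.card_range]
      have h3 := Finset.card_le_card h1
      have h4 : Λ.card ≤ N := by
        simpa using Finset.card_le_card hΛsub
      omega
    have hΛ'c : (Sf \ Λ').card ≤ g N δ := by
      have h1 : Sf \ Λ' ⊆ Finset.range N \ Λ' :=
        Finset.sdiff_subset_sdiff (Finset.filter_subset _ _) le_rfl
      have h2 : (Finset.range N \ Λ').card = N - Λ'.card := by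
        rw [Finset.card_sdiff_of_subset hΛ'sub, Finset.card_range]
      have h3 := Finset.card_le_card h1
      have h4 : Λ'.card ≤ N := by
        simpa using Finset.card_le_card hΛ'sub
      omega
    have hsub : Sf ⊆ (Sf ∩ Λ ∩ Λ') ∪ ((Sf \ Λ) ∪ (Sf \ Λ')) := by
      intro j hj
      by_cases h1 : j ∈ Λ
      · by_cases h2 : j ∈ Λ'
        · exact Finset.mem_union_left _ (by simp [hj, h1, h2])
        · exact Finset.mem_union_right _ (Finset.mem_union_right _ (by simp [hj, h2]))
      · exact Finset.mem_union_right _ (Finset.mem_union_left _ (by simp [hj, h1]))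
    have hcard : 0 < (Sf ∩ Λ ∩ Λ').card := by
      have h5 := Finset.card_le_card hsub
      have h6 := Finset.card_union_le (Sf ∩ Λ ∩ Λ') ((Sf \ Λ) ∪ (Sf \ Λ'))
      have h7 := Finset.card_union_le (Sf \ Λ) (Sf \ Λ')
      omega
    obtain ⟨j, hj⟩ := Finset.card_pos.1 hcard
    simp only [Finset.mem_inter] at hj
    obtain ⟨⟨hjS, hjΛ⟩, hjΛ'⟩ := hj
    have hjN : j < N := Finset.mem_range.1 (Finset.filter_subset _ _ hjS)
    have hjd : σ < dist (T^[j] x) (T^[j] y) := (Finset.mem_filter.1 hjS).2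
    have htr1 : dist (T^[j] (if w i then x else y)) (T^[j] (T^[(i : ℕ) * N] (z w))) < δ :=
      hΛtr j hjΛ
    have htr2 : dist (T^[j] (if w' i then x else y)) (T^[j] (T^[(i : ℕ) * N] (z w'))) < δ :=
      hΛ'tr j hjΛ'
    have hab : σ < dist (T^[j] (if w i then x else y)) (T^[j] (if w' i then x else y)) := by
      rcases Bool.eq_false_or_eq_true (w i) with h1 | h1 <;>
        rcases Bool.eq_false_or_eq_true (w' i) with h2 | h2 <;>
        simp [h1, h2] at hi ⊢ <;>
        first
          | exact hjd
          | rwa [dist_comm]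
    refine ⟨j + (i : ℕ) * N, ?_, ?_⟩
    · have : (i : ℕ) < m := i.isLt
      calc j + (i : ℕ) * N < N + (i : ℕ) * N := by omega
        _ = ((i : ℕ) + 1) * N := by ring
        _ ≤ m * N := Nat.mul_le_mul_right _ (by omega)
    · rw [Function.iterate_add_apply, Function.iterate_add_apply]
      have h4 := dist_triangle4 (T^[j] (if w i then x else y))
        (T^[j] (T^[(i : ℕ) * N] (z w))) (T^[j] (T^[(i : ℕ) * N] (z w')))
        (T^[j] (if w' i then x else y))
      rw [dist_comm (T^[j] (T^[(i : ℕ) * N] (z w'))) (T^[j] (if w' i then x else y))] at h4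
      linarith
  -- the separated family
  have hzinj : Function.Injective z := by
    intro w w' h
    by_contra hne
    obtain ⟨j, _, hjd⟩ := key w w' hne
    rw [h] at hjd
    simp at hjd
    linarith
  have hmem : 2 ^ m ∈ {k : ℕ | ∃ F : Finset X,
      (∀ a ∈ F, ∀ b ∈ F, a ≠ b → ∃ j < m * N, σ - 2 * δ < dist (T^[j] a) (T^[j] b)) ∧
      F.card = k} := by
    refine ⟨Finset.image z Finset.univ, ?_, ?_⟩
    · intro a ha b hb hab
      obtain ⟨w, _, rfl⟩ := Finset.mem_image.1 ha
      obtain ⟨w', _, rfl⟩ := Finset.mem_image.1 hb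
      exact key w w' (fun h => hab (by rw [h]))
    · rw [Finset.card_image_of_injective _ hzinj, Finset.card_univ]
      simp
  exact le_csSup (sepSet_bddAbove T hT (m * N) (σ - 2 * δ) (by linarith)) hmem
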